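/- Let T be a commutative monad on Set and (B, β) a T-algebra. Any f : X × Y → B extends uniquely along η_X × η_Y to a bilinear map f̃ : TX × TY → B, given explicitly by f̃ = β ∘ T(f) ∘ dst_{X,Y}. -/

import Mathlib

universe u

open CategoryTheory

/-- A commutative (strong) monad on `Set`: a monad with a strength satisfying the standard
coherence laws, whose double strength (definable in two ways from the strength and the
swapped strength) is unambiguous. -/
structure CommMonadData : Type (u + 1) where
  T : Monad (Type u)
  st : ∀ (X Y : Type u), X × T.obj Y → T.obj (X × Y)
  st_natural : ∀ {X X' Y Y' : Type u} (f : X → X') (g : Y → Y'),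
    T.map (TypeCat.ofHom (Prod.map f g)) ∘ st X Y = st X' Y' ∘ Prod.map f (T.map (TypeCat.ofHom g))
  st_unit : ∀ (X Y : Type u),
    st X Y ∘ Prod.map (id : X → X) (T.η.app Y) = T.η.app (X × Y)
  st_mult : ∀ (X Y : Type u),
    st X Y ∘ Prod.map (id : X → X) (T.μ.app Y)
      = T.μ.app (X × Y) ∘ T.map (TypeCat.ofHom (st X Y)) ∘ st X (T.obj Y)
  st_proj : ∀ (Y : Type u), T.map (TypeCat.ofHom Prod.snd) ∘ st PUnit Y = Prod.snd
  st' : ∀ (X Y : Type u), T.obj X × Y → T.obj (X × Y)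
  st'_def : ∀ (X Y : Type u) (p : T.obj X × Y),
    st' X Y p = T.map (TypeCat.ofHom Prod.swap) (st Y X (p.2, p.1))
  dst : ∀ (X Y : Type u), T.obj X × T.obj Y → T.obj (X × Y)
  dst_def : ∀ (X Y : Type u) (p : T.obj X × T.obj Y),
    dst X Y p = T.μ.app (X × Y) (T.map (TypeCat.ofHom (st' X Y)) (st (T.obj X) Y p))
  comm : ∀ (X Y : Type u) (p : T.obj X × T.obj Y),
    dst X Y p = T.μ.app (X × Y) (T.map (TypeCat.ofHom (st X Y)) (st' X (T.obj Y) p))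

/-- The free algebra `(T X, μ_X)` on `X`. -/
def CommMonadData.free (M : CommMonadData.{u}) (X : Type u) : Monad.Algebra M.T :=
  (Monad.free M.T).obj X

/-- Linearity of `g : T X × T Y → B` in the first argument. -/
def CommMonadData.Linear₁ (M : CommMonadData.{u}) {X Y : Type u} (B : Monad.Algebra M.T)
    (g : M.T.obj X × M.T.obj Y → B.A) : Prop :=
  ∀ p : M.T.obj (M.T.obj X) × M.T.obj Y,
    g (M.T.μ.app X p.1, p.2) = B.a (M.T.map (TypeCat.ofHom g) (M.st' (M.T.obj X) (M.T.obj Y) p))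

/-- Linearity of `g : T X × T Y → B` in the second argument. -/
def CommMonadData.Linear₂ (M : CommMonadData.{u}) {X Y : Type u} (B : Monad.Algebra M.T)
    (g : M.T.obj X × M.T.obj Y → B.A) : Prop :=
  ∀ p : M.T.obj X × M.T.obj (M.T.obj Y),
    g (p.1, M.T.μ.app Y p.2) = B.a (M.T.map (TypeCat.ofHom g) (M.st (M.T.obj X) (M.T.obj Y) p))

namespace CommMonadData

variable (M : CommMonadData.{u})

lemma map_map {X Y Z : Type u} (f : X → Y) (g : Y → Z) (t : M.T.obj X) :
    M.T.map (TypeCat.ofHom g) (M.T.map (TypeCat.ofHom f) t) = M.T.map (TypeCat.ofHom (fun x => g (f x))) t := by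
  exact (M.T.toFunctor.map_comp_apply (TypeCat.ofHom f) (TypeCat.ofHom g) t).symm

lemma eta_nat {X Y : Type u} (f : X → Y) (x : X) :
    M.T.map (TypeCat.ofHom f) (M.T.η.app X x) = M.T.η.app Y (f x) := by
  have := types_congr_hom (M.T.η.naturality (X := X) (Y := Y) (TypeCat.ofHom f)) x
  simpa [types_comp_apply] using this.symm

lemma mu_nat {X Y : Type u} (f : X → Y) (t : M.T.obj (M.T.obj X)) :
    M.T.map (TypeCat.ofHom f) (M.T.μ.app X t) = M.T.μ.app Y (M.T.map (TypeCat.ofHom (M.T.map (TypeCat.ofHom f))) t) := by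
  have := types_congr_hom (M.T.μ.naturality (X := X) (Y := Y) (TypeCat.ofHom f)) t
  simpa [types_comp_apply] using this.symm

lemma mu_eta {X : Type u} (t : M.T.obj X) :
    M.T.μ.app X (M.T.η.app (M.T.obj X) t) = t := by
  have := types_congr_hom (M.T.left_unit X) t
  exact this

lemma mu_Teta {X : Type u} (t : M.T.obj X) :
    M.T.μ.app X (M.T.map (TypeCat.ofHom (M.T.η.app X)) t) = t := by
  have := types_congr_hom (M.T.right_unit X) t
  exact this

lemma mu_assoc {X : Type u} (t : M.T.obj (M.T.obj (M.T.obj X))) :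
    M.T.μ.app X (M.T.map (TypeCat.ofHom (M.T.μ.app X)) t) = M.T.μ.app X (M.T.μ.app (M.T.obj X) t) := by
  have := types_congr_hom (M.T.assoc X) t
  simpa [types_comp_apply] using this

lemma alg_unit (B : Monad.Algebra M.T) (x : B.A) : B.a (M.T.η.app B.A x) = x := by
  have := types_congr_hom B.unit x
  simpa [types_comp_apply] using this

lemma alg_assoc (B : Monad.Algebra M.T) (t : M.T.obj (M.T.obj B.A)) :
    B.a (M.T.μ.app B.A t) = B.a (M.T.map (TypeCat.ofHom B.a) t) := by
  have := types_congr_hom B.assoc t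
  simpa [types_comp_apply] using this

lemma st_nat_pt {X X' Y Y' : Type u} (f : X → X') (g : Y → Y') (x : X) (t : M.T.obj Y) :
    M.T.map (TypeCat.ofHom (Prod.map f g)) (M.st X Y (x, t)) = M.st X' Y' (f x, M.T.map (TypeCat.ofHom g) t) := by
  have := congrFun (M.st_natural f g) (x, t)
  simpa [Function.comp] using this

lemma st_unit_pt {X Y : Type u} (x : X) (y : Y) :
    M.st X Y (x, M.T.η.app Y y) = M.T.η.app (X × Y) (x, y) := by
  have := congrFun (M.st_unit X Y) (x, y)
  simpa [Function.comp] using this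

lemma st_mult_pt {X Y : Type u} (x : X) (t : M.T.obj (M.T.obj Y)) :
    M.st X Y (x, M.T.μ.app Y t)
      = M.T.μ.app (X × Y) (M.T.map (TypeCat.ofHom (M.st X Y)) (M.st X (M.T.obj Y) (x, t))) := by
  have := congrFun (M.st_mult X Y) (x, t)
  simpa [Function.comp] using this

lemma st'_unit_pt {X Y : Type u} (x : X) (y : Y) :
    M.st' X Y (M.T.η.app X x, y) = M.T.η.app (X × Y) (x, y) := by
  rw [M.st'_def]
  show M.T.map (TypeCat.ofHom Prod.swap) (M.st Y X (y, M.T.η.app X x)) = _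
  rw [M.st_unit_pt, M.eta_nat]
  rfl

lemma st'_nat_pt {X X' Y Y' : Type u} (f : X → X') (g : Y → Y') (t : M.T.obj X) (y : Y) :
    M.T.map (TypeCat.ofHom (Prod.map f g)) (M.st' X Y (t, y)) = M.st' X' Y' (M.T.map (TypeCat.ofHom f) t, g y) := by
  rw [M.st'_def, M.st'_def]
  show M.T.map (TypeCat.ofHom (Prod.map f g)) (M.T.map (TypeCat.ofHom Prod.swap) (M.st Y X (y, t)))
      = M.T.map (TypeCat.ofHom Prod.swap) (M.st Y' X' (g y, M.T.map (TypeCat.ofHom f) t))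
  rw [M.map_map, ← M.st_nat_pt g f y t, M.map_map]

lemma st'_mult_pt {X Y : Type u} (a : M.T.obj (M.T.obj X)) (y : Y) :
    M.st' X Y (M.T.μ.app X a, y)
      = M.T.μ.app (X × Y) (M.T.map (TypeCat.ofHom (M.st' X Y)) (M.st' (M.T.obj X) Y (a, y))) := by
  rw [M.st'_def, M.st'_def]
  show M.T.map (TypeCat.ofHom Prod.swap) (M.st Y X (y, M.T.μ.app X a))
      = M.T.μ.app (X × Y) (M.T.map (TypeCat.ofHom (M.st' X Y)) (M.T.map (TypeCat.ofHom Prod.swap) (M.st Y (M.T.obj X) (y, a))))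
  rw [M.st_mult_pt, M.mu_nat, M.map_map, M.map_map]
  simp only [M.st'_def, Prod.fst_swap, Prod.snd_swap, Prod.mk.eta]

lemma dst_eta_eta {X Y : Type u} (x : X) (y : Y) :
    M.dst X Y (M.T.η.app X x, M.T.η.app Y y) = M.T.η.app (X × Y) (x, y) := by
  rw [M.dst_def]
  show M.T.μ.app _ (M.T.map (TypeCat.ofHom (M.st' X Y)) (M.st (M.T.obj X) Y (M.T.η.app X x, M.T.η.app Y y))) = _
  rw [M.st_unit_pt, M.eta_nat, M.st'_unit_pt, M.mu_eta]

lemma dst_mult₂_pt {X Y : Type u} (a : M.T.obj X) (b : M.T.obj (M.T.obj Y)) :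
    M.dst X Y (a, M.T.μ.app Y b)
      = M.T.μ.app (X × Y) (M.T.map (TypeCat.ofHom (M.dst X Y)) (M.st (M.T.obj X) (M.T.obj Y) (a, b))) := by
  rw [M.dst_def]
  show M.T.μ.app _ (M.T.map (TypeCat.ofHom (M.st' X Y)) (M.st (M.T.obj X) Y (a, M.T.μ.app Y b))) = _
  rw [M.st_mult_pt, M.mu_nat, ← M.mu_assoc, M.map_map, M.map_map]
  simp only [← M.dst_def]

lemma dst_mult₁_pt {X Y : Type u} (a : M.T.obj (M.T.obj X)) (b : M.T.obj Y) :
    M.dst X Y (M.T.μ.app X a, b)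
      = M.T.μ.app (X × Y) (M.T.map (TypeCat.ofHom (M.dst X Y)) (M.st' (M.T.obj X) (M.T.obj Y) (a, b))) := by
  rw [M.comm]
  show M.T.μ.app _ (M.T.map (TypeCat.ofHom (M.st X Y)) (M.st' X (M.T.obj Y) (M.T.μ.app X a, b))) = _
  rw [M.st'_mult_pt, M.mu_nat, ← M.mu_assoc, M.map_map, M.map_map]
  simp only [← M.comm]

end CommMonadData

namespace CommMonadData

lemma claimA (M : CommMonadData.{u}) (B : Monad.Algebra M.T) {X Y : Type u}
    (f : X × Y → B.A) (g : M.T.obj X × M.T.obj Y → B.A)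
    (hext : ∀ p : X × Y, g (M.T.η.app X p.1, M.T.η.app Y p.2) = f p)
    (h2 : M.Linear₂ B g) (x : X) (t : M.T.obj Y) :
    g (M.T.η.app X x, t) = B.a (M.T.map (TypeCat.ofHom f) (M.st X Y (x, t))) := by
  conv_lhs => rw [← M.mu_Teta (X := Y) t]
  rw [h2 (M.T.η.app X x, M.T.map (TypeCat.ofHom (M.T.η.app Y)) t)]
  rw [← M.st_nat_pt (M.T.η.app X) (M.T.η.app Y) x t, M.map_map]
  have hfun : (fun q : X × Y => g (Prod.map (M.T.η.app X) (M.T.η.app Y) q)) = f :=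
    funext fun q => hext q
  exact congrArg B.a (congrArg (fun h => M.T.map (TypeCat.ofHom h) (M.st X Y (x, t))) hfun)

lemma canonical_form (M : CommMonadData.{u}) (B : Monad.Algebra M.T) {X Y : Type u}
    (f : X × Y → B.A) (g : M.T.obj X × M.T.obj Y → B.A)
    (hext : ∀ p : X × Y, g (M.T.η.app X p.1, M.T.η.app Y p.2) = f p)
    (h1 : M.Linear₁ B g) (h2 : M.Linear₂ B g) (a : M.T.obj X) (b : M.T.obj Y) :
    g (a, b) = B.a (M.T.map (TypeCat.ofHom (fun p : X × M.T.obj Y => B.a (M.T.map (TypeCat.ofHom f) (M.st X Y p))))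
      (M.st' X (M.T.obj Y) (a, b))) := by
  conv_lhs => rw [show a = M.T.μ.app X (M.T.map (M.T.η.app X) a) from (M.mu_Teta a).symm]
  rw [h1 (M.T.map (M.T.η.app X) a, b)]
  have hst : M.st' (M.T.obj X) (M.T.obj Y) (M.T.map (M.T.η.app X) a, b)
      = M.T.map (TypeCat.ofHom (Prod.map (M.T.η.app X) id)) (M.st' X (M.T.obj Y) (a, b)) := by
    simpa using (M.st'_nat_pt (M.T.η.app X) (id : M.T.obj Y → M.T.obj Y) a b).symm
  rw [hst, M.map_map]
  have hfun : (fun q : X × M.T.obj Y => g (Prod.map (M.T.η.app X) id q))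
      = fun q : X × M.T.obj Y => B.a (M.T.map (TypeCat.ofHom f) (M.st X Y q)) :=
    funext fun q => M.claimA B f g hext h2 q.1 q.2
  exact congrArg B.a (congrArg (fun h => M.T.map (TypeCat.ofHom h) (M.st' X (M.T.obj Y) (a, b))) hfun)

end CommMonadData

/-- for a commutative monad `T` on `Set` and a `T`-algebra `(B, β)`, every
`f : X × Y → B` extends uniquely along `η_X × η_Y` to a bilinear map `f̃ : T X × T Y → B`,
given explicitly by `f̃ = β ∘ T f ∘ dst`. -/
theorem comm_monad_bilinear_extension (M : CommMonadData.{u})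
    (B : Monad.Algebra M.T) (X Y : Type u) (f : X × Y → B.A) :
    ((∀ p : X × Y, B.a (M.T.map (TypeCat.ofHom f) (M.dst X Y (M.T.η.app X p.1, M.T.η.app Y p.2))) = f p) ∧
      M.Linear₁ B (fun q => B.a (M.T.map (TypeCat.ofHom f) (M.dst X Y q))) ∧
      M.Linear₂ B (fun q => B.a (M.T.map (TypeCat.ofHom f) (M.dst X Y q)))) ∧
    (∀ g : M.T.obj X × M.T.obj Y → B.A,
      (∀ p : X × Y, g (M.T.η.app X p.1, M.T.η.app Y p.2) = f p) →
      M.Linear₁ B g → M.Linear₂ B g →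
      g = fun q => B.a (M.T.map (TypeCat.ofHom f) (M.dst X Y q))) := by
  have hext : ∀ p : X × Y,
      B.a (M.T.map (TypeCat.ofHom f) (M.dst X Y (M.T.η.app X p.1, M.T.η.app Y p.2))) = f p := by
    intro p
    rw [M.dst_eta_eta, M.eta_nat, M.alg_unit]
  have h1 : M.Linear₁ B (fun q => B.a (M.T.map (TypeCat.ofHom f) (M.dst X Y q))) := by
    intro p
    obtain ⟨a, b⟩ := p
    show B.a (M.T.map (TypeCat.ofHom f) (M.dst X Y (M.T.μ.app X a, b))) = _
    rw [M.dst_mult₁_pt, M.mu_nat, M.alg_assoc, M.map_map, M.map_map]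
  have h2 : M.Linear₂ B (fun q => B.a (M.T.map (TypeCat.ofHom f) (M.dst X Y q))) := by
    intro p
    obtain ⟨a, b⟩ := p
    show B.a (M.T.map (TypeCat.ofHom f) (M.dst X Y (a, M.T.μ.app Y b))) = _
    rw [M.dst_mult₂_pt, M.mu_nat, M.alg_assoc, M.map_map, M.map_map]
  refine ⟨⟨hext, h1, h2⟩, fun g hg hg1 hg2 => funext fun q => ?_⟩
  obtain ⟨a, b⟩ := q
  rw [M.canonical_form B f g hg hg1 hg2 a b,
    ← M.canonical_form B f _ hext h1 h2 a b]
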